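/- For every integer m, the function e_m on S¹ defined by e_m(v(θ)) = exp(i m θ) is an eigenfunction of K with eigenvalue 1/(1 − 4m²); that is, (K e_m)(v(θ)) = exp(i m θ)/(1 − 4m²) for all θ ∈ ℝ. -/

import Mathlib

open Real

noncomputable section

/-- The gain operator of the two-dimensional hard-disk linear Boltzmann
equation, acting on (complex-valued) functions of the angle `θ ∈ ℝ`
parameterizing `v(θ) = (cos θ, sin θ) ∈ S¹`:
`(K f)(v(θ)) = (1/2) ∫_{−1}^{1} f(v(θ + π − 2 arcsin δ)) dδ`. -/
def Kangle (f : ℝ → ℂ) (θ : ℝ) : ℂ :=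
  (1 / 2 : ℂ) * ∫ δ in (-1:ℝ)..1, f (θ + π - 2 * arcsin δ)

/-- for every integer `m`, the function `e_m(v(θ)) = exp(i m θ)`
is an eigenfunction of `K` with eigenvalue `1/(1 − 4m²)`:
`(K e_m)(v(θ)) = exp(i m θ)/(1 − 4m²)` for all `θ ∈ ℝ`. -/
theorem K_eigenfunction_exp (m : ℤ) (θ : ℝ) :
    Kangle (fun t : ℝ => Complex.exp (Complex.I * (m : ℂ) * (t : ℂ))) θ
      = Complex.exp (Complex.I * (m : ℂ) * (θ : ℂ)) / (1 - 4 * (m : ℂ) ^ 2) := by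
  
  set c : ℂ := Complex.I * m with hc
  set D : ℂ := 1 - 4 * (m:ℂ)^2 with hD
  have hD0 : D ≠ 0 := by
    have h4 : (4 * m^2 : ℤ) ≠ 1 := by
      rcases eq_or_ne m 0 with rfl | hm
      · simp
      · have h1 : 1 ≤ |m| := Int.one_le_abs hm
        nlinarith [sq_abs m, h1]
    intro h
    apply h4
    have : (4 * (m:ℂ)^2) = 1 := by linear_combination -h
    exact_mod_cast this
  have hcsq : c^2 = -((m:ℂ)^2) := by
    rw [hc]; ring_nf; rw [Complex.I_sq]; ring
  -- antiderivative
  set F : ℝ → ℂ := fun δ =>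
    Complex.exp (c * ((θ:ℝ) + π - 2 * arcsin δ : ℝ)) * ((δ:ℂ) - 2*c*(√(1-δ^2) : ℝ)) / D
    with hF
  set g : ℝ → ℂ := fun δ => Complex.exp (c * ((θ:ℝ) + π - 2 * arcsin δ : ℝ)) with hg
  have hgcont : Continuous g := by
    apply Complex.continuous_exp.comp
    exact continuous_const.mul (Complex.continuous_ofReal.comp
      ((continuous_const.sub (continuous_const.mul Real.continuous_arcsin))))
  have hFcont : ContinuousOn F (Set.Icc (-1:ℝ) 1) := by
    apply Continuous.continuousOn
    apply Continuous.div_const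
    apply hgcont.mul
    exact (Complex.continuous_ofReal.comp continuous_id).sub
      (continuous_const.mul (Complex.continuous_ofReal.comp
        (Real.continuous_sqrt.comp (continuous_const.sub (continuous_pow 2)))))
  have hderiv : ∀ x ∈ Set.Ioo (-1:ℝ) 1, HasDerivAt F (g x) x := by
    intro x hx
    obtain ⟨hx1, hx2⟩ := hx
    have hs0 : (0:ℝ) < 1 - x^2 := by nlinarith
    have hs : (0:ℝ) < √(1 - x^2) := Real.sqrt_pos.2 hs0
    have hsne : (√(1 - x^2) : ℝ) ≠ 0 := ne_of_gt hs
    -- derivative of inner real function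
    have hu : HasDerivAt (fun δ : ℝ => ((θ:ℝ) + π - 2 * arcsin δ)) (-(2 / √(1 - x^2))) x := by
      have := (hasDerivAt_arcsin (ne_of_gt hx1) (ne_of_lt hx2)).const_mul (2:ℝ)
      have := (hasDerivAt_const x ((θ:ℝ) + π)).sub this
      refine this.congr_deriv ?_
      ring
    -- derivative of exp part
    have hE : HasDerivAt (fun δ : ℝ => Complex.exp (c * ((θ:ℝ) + π - 2 * arcsin δ : ℝ)))
        (Complex.exp (c * ((θ:ℝ) + π - 2 * arcsin x : ℝ)) * (c * (-(2 / √(1 - x^2)) : ℝ))) x := by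
      have h1 : HasDerivAt (fun δ : ℝ => c * (((θ:ℝ) + π - 2 * arcsin δ : ℝ) : ℂ))
          (c * ((-(2 / √(1 - x^2)) : ℝ) : ℂ)) x := (hu.ofReal_comp).const_mul c
      exact h1.cexp
    -- derivative of sqrt part
    have hS : HasDerivAt (fun δ : ℝ => √(1 - δ^2)) (-x / √(1 - x^2)) x := by
      have h1 : HasDerivAt (fun δ : ℝ => 1 - δ^2) (-(2*x)) x := by
        have := (hasDerivAt_pow 2 x).const_sub (1:ℝ)
        refine this.congr_deriv ?_
        ring
      have := (Real.hasDerivAt_sqrt (ne_of_gt hs0)).comp x h1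
      refine this.congr_deriv ?_
      field_simp
    have hP : HasDerivAt (fun δ : ℝ => ((δ:ℂ) - 2*c*(√(1-δ^2) : ℝ)))
        (1 - 2*c*((-x / √(1 - x^2) : ℝ) : ℂ)) x := by
      have h1 : HasDerivAt (fun δ : ℝ => ((δ:ℂ))) 1 x := Complex.ofRealCLM.hasDerivAt
      exact h1.sub ((hS.ofReal_comp).const_mul (2*c))
    have := ((hE.mul hP).div_const D)
    refine this.congr_deriv ?_
    rw [hg, hD]
    push_cast
    set s : ℂ := ((√(1 - x^2) : ℝ) : ℂ) with hsdef
    set X : ℂ := Complex.exp (c * ((θ:ℂ) + (π:ℂ) - 2 * ((arcsin x : ℝ):ℂ))) with hX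
    have hsC : s ≠ 0 := by
      rw [hsdef]
      exact_mod_cast hsne
    field_simp
    rw [div_eq_iff (by intro h; apply hD0; rw [hD]; exact h)]
    linear_combination (4*X*s) * hcsq
  have hgint : IntervalIntegrable g MeasureTheory.volume (-1) 1 :=
    hgcont.intervalIntegrable _ _
  have key : (∫ δ in (-1:ℝ)..1, g δ) = F 1 - F (-1) :=
    intervalIntegral.integral_eq_sub_of_hasDerivAt_of_le (by norm_num) hFcont hderiv hgint
  have hF1 : F 1 = Complex.exp (c * θ) / D := by
    rw [hF]
    show Complex.exp (c * ((θ + π - 2*arcsin (1:ℝ) : ℝ):ℂ)) *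
      ((((1:ℝ)):ℂ) - 2*c*((√(1-(1:ℝ)^2):ℝ):ℂ)) / D = _
    have e1 : ((θ + π - 2 * arcsin (1:ℝ) : ℝ) : ℂ) = (θ:ℂ) := by
      rw [Real.arcsin_one]; push_cast; ring
    have e2 : (√(1 - (1:ℝ)^2) : ℝ) = 0 := by norm_num
    rw [e1, e2]
    norm_num
  have hFm1 : F (-1) = -(Complex.exp (c * θ) / D) := by
    rw [hF]
    show Complex.exp (c * ((θ + π - 2*arcsin (-1:ℝ) : ℝ):ℂ)) *
      ((((-1:ℝ)):ℂ) - 2*c*((√(1-(-1:ℝ)^2):ℝ):ℂ)) / D = _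
    have e1 : ((θ + π - 2 * arcsin (-1:ℝ) : ℝ) : ℂ) = (θ:ℂ) + 2*(π:ℂ) := by
      rw [Real.arcsin_neg, Real.arcsin_one]; push_cast; ring
    have e2 : (√(1 - (-1:ℝ)^2) : ℝ) = 0 := by norm_num
    rw [e1, e2, mul_add, Complex.exp_add]
    have hper : Complex.exp (c * (2*(π:ℂ))) = 1 := by
      rw [hc, show Complex.I * (m:ℂ) * (2*(π:ℂ)) = (m:ℂ) * (2*(π:ℂ)*Complex.I) by ring]
      exact Complex.exp_int_mul_two_pi_mul_I m
    rw [hper]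
    push_cast
    ring
  have hK : Kangle (fun t : ℝ => Complex.exp (Complex.I * (m : ℂ) * (t : ℂ))) θ
      = (1/2 : ℂ) * (∫ δ in (-1:ℝ)..1, g δ) := by
    rw [Kangle]
  rw [hK, key, hF1, hFm1, hc]
  ring
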